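/- Let F be a field and k ≥ 2. Let P ≤ SL_k(F) be the subgroup of all matrices of block form [[1, ξᵀ],[0, h]] with h ∈ SL_{k−1}(F) and ξ ∈ F^{k−1} (this is the stabilizer of the first standard basis column vector under the action g ↦ g^{-1}·e_1). Then every left coset of P in SL_k(F) contains a representative of one of the following forms: for every G ∈ SL_k(F) there exists M ∈ P such that M·G equals either (i) the block matrix [[x^{-1}, 0, 0],[y, x, 0],[v, 0, I_{k−2}]] (row and column blocks of sizes 1, 1, k−2) for some x ∈ F^×, y ∈ F and column vector v ∈ F^{k−2}, or (ii) for some integer a with 0 ≤ a ≤ k−2, the block matrix [[0, 0, (−1)^{a+1} x^{-1}, 0],[x, 0, 0, 0],[0, I_a, 0, 0],[0, 0, v, I_{k−a−2}]] (row blocks of sizes 1, 1, a, k−a−2; column blocks of sizes 1, a, 1, k−a−2) for some x ∈ F^× and column vector v ∈ F^{k−a−2}. -/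

import Mathlib

/-- Representative of type (i): the block matrix
`[[x⁻¹, 0, 0], [y, x, 0], [v, 0, I_{k−2}]]` (row and column blocks of sizes `1, 1, k−2`). -/
def RepA (F : Type*) [Field F] (k : ℕ) (x y : F) (v : Fin (k - 2) → F) :
    Matrix (Fin k) (Fin k) F :=
  fun i j =>
    if hi0 : (i : ℕ) = 0 then (if (j : ℕ) = 0 then x⁻¹ else 0)
    else if hi1 : (i : ℕ) = 1 then
      (if (j : ℕ) = 0 then y else if (j : ℕ) = 1 then x else 0)
    else
      if (j : ℕ) = 0 then v ⟨(i : ℕ) - 2, by have := i.isLt; omega⟩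
      else if (j : ℕ) = (i : ℕ) then 1 else 0

/-- Representative of type (ii): the block matrix
`[[0, 0, (−1)^{a+1} x⁻¹, 0], [x, 0, 0, 0], [0, I_a, 0, 0], [0, 0, v, I_{k−a−2}]]`
(row blocks of sizes `1, 1, a, k−a−2`; column blocks of sizes `1, a, 1, k−a−2`). -/
def RepB (F : Type*) [Field F] (k a : ℕ) (x : F) (v : Fin (k - a - 2) → F) :
    Matrix (Fin k) (Fin k) F :=
  fun i j =>
    if hi0 : (i : ℕ) = 0 then (if (j : ℕ) = a + 1 then (-1) ^ (a + 1) * x⁻¹ else 0)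
    else if hi1 : (i : ℕ) = 1 then (if (j : ℕ) = 0 then x else 0)
    else if hia : (i : ℕ) ≤ a + 1 then (if (j : ℕ) + 1 = (i : ℕ) then 1 else 0)
    else
      if (j : ℕ) = a + 1 then v ⟨(i : ℕ) - a - 2, by have := i.isLt; omega⟩
      else if (j : ℕ) = (i : ℕ) then 1 else 0

lemma det_RepA {F : Type*} [Field F] {k : ℕ} (hk : 2 ≤ k) {x : F} (hx : x ≠ 0) (y : F)
    (v : Fin (k - 2) → F) : (RepA F k x y v).det = 1 := by
  have ht : (RepA F k x y v).BlockTriangular OrderDual.toDual := by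
    intro i j hij
    have h : (i : ℕ) < (j : ℕ) := hij
    simp only [RepA]
    split_ifs <;> first | rfl | (exfalso; omega)
  rw [Matrix.det_of_lowerTriangular _ ht]
  have hdiag : ∀ i : Fin k, RepA F k x y v i i =
      (if i = (⟨0, by omega⟩ : Fin k) then x⁻¹ else 1) *
        (if i = (⟨1, by omega⟩ : Fin k) then x else 1) := by
    intro i
    simp only [RepA, Fin.ext_iff]
    split_ifs <;> first | (exfalso; omega) | ring
  rw [Finset.prod_congr rfl (fun i _ => hdiag i), Finset.prod_mul_distrib,
    Finset.prod_ite_eq' Finset.univ, Finset.prod_ite_eq' Finset.univ]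
  simp [inv_mul_cancel₀ hx]

/-- Cycle-with-tail matrix used to compute `det RepB`. -/
def CycV (F : Type*) [Field F] (n a : ℕ) (c : F) (v : ℕ → F) :
    Matrix (Fin n) (Fin n) F :=
  fun i j =>
    if (i : ℕ) = 0 then (if (j : ℕ) = a then c else 0)
    else if (i : ℕ) ≤ a then (if (j : ℕ) + 1 = (i : ℕ) then 1 else 0)
    else if (j : ℕ) = a then v ((i : ℕ) - a - 1)
    else if (j : ℕ) = (i : ℕ) then 1 else 0

lemma succAbove_one_val {m : ℕ} (hm : 1 < m + 1) (r : Fin m) :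
    (((⟨1, hm⟩ : Fin (m + 1)).succAbove r : Fin (m + 1)) : ℕ) =
      if (r : ℕ) < 1 then (r : ℕ) else (r : ℕ) + 1 := by
  rw [Fin.succAbove]
  split_ifs with h1 h2 h3 <;> simp_all [Fin.lt_def]

lemma det_CycV {F : Type*} [Field F] :
    ∀ (a : ℕ) {n : ℕ}, a < n → ∀ (c : F) (v : ℕ → F),
      (CycV F n a c v).det = (-1) ^ a * c := by
  intro a
  induction a with
  | zero =>
    intro n hn c v
    have ht : (CycV F n 0 c v).BlockTriangular OrderDual.toDual := by
      intro i j hij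
      have h : (i : ℕ) < (j : ℕ) := hij
      simp only [CycV]
      split_ifs <;> first | (exfalso; omega) | rfl
    rw [Matrix.det_of_lowerTriangular _ ht]
    have hdiag : ∀ i : Fin n, CycV F n 0 c v i i =
        (if i = (⟨0, by omega⟩ : Fin n) then c else 1) := by
      intro i
      simp only [CycV, Fin.ext_iff]
      split_ifs <;> first | (exfalso; omega) | rfl
    rw [Finset.prod_congr rfl (fun i _ => hdiag i), Finset.prod_ite_eq' Finset.univ]
    simp
  | succ a ih =>
    intro n hn c v
    obtain ⟨m, rfl⟩ : ∃ m, n = m + 1 := ⟨n - 1, by omega⟩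
    have hm : 1 < m + 1 := by omega
    rw [Matrix.det_succ_column_zero]
    rw [Fintype.sum_eq_single (⟨1, hm⟩ : Fin (m + 1))]
    · have h10 : CycV F (m + 1) (a + 1) c v ⟨1, hm⟩ 0 = 1 := by
        simp only [CycV]
        norm_num
      rw [h10]
      have hsub : (CycV F (m + 1) (a + 1) c v).submatrix (⟨1, hm⟩ : Fin (m + 1)).succAbove
          Fin.succ = CycV F m a c v := by
        funext r j
        simp only [Matrix.submatrix_apply, CycV]
        have hr := succAbove_one_val hm r
        have hj : ((j.succ : Fin (m + 1)) : ℕ) = (j : ℕ) + 1 := Fin.val_succ j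
        rw [hj]
        by_cases h : (r : ℕ) < 1
        · rw [if_pos h] at hr
          rw [hr]
          split_ifs <;> first | (exfalso; omega) | rfl
        · rw [if_neg h] at hr
          rw [hr]
          split_ifs <;> first | (exfalso; first | assumption | omega) | rfl | (congr 1; omega)
      rw [hsub, ih (by omega) c v]
      ring
    · intro i hi
      have hiv : (i : ℕ) ≠ 1 := fun h => hi (Fin.ext h)
      have h0 : CycV F (m + 1) (a + 1) c v i 0 = 0 := by
        simp only [CycV]
        have h0v : ((0 : Fin (m + 1)) : ℕ) = 0 := rfl
        rw [h0v]
        split_ifs <;> first | (exfalso; first | assumption | omega) | rfl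
      rw [h0, mul_zero, zero_mul]

set_option maxHeartbeats 1000000 in
lemma det_RepB {F : Type*} [Field F] {k a : ℕ} (hak : a + 2 ≤ k) {x : F} (hx : x ≠ 0)
    (v : Fin (k - a - 2) → F) : (RepB F k a x v).det = 1 := by
  obtain ⟨m, rfl⟩ : ∃ m, k = m + 1 := ⟨k - 1, by omega⟩
  have hm : 1 < m + 1 := by omega
  rw [Matrix.det_succ_column_zero]
  rw [Fintype.sum_eq_single (⟨1, hm⟩ : Fin (m + 1))]
  · have h10 : RepB F (m + 1) a x v ⟨1, hm⟩ 0 = x := by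
      simp only [RepB]
      norm_num
    rw [h10]
    have hsub : (RepB F (m + 1) a x v).submatrix (⟨1, hm⟩ : Fin (m + 1)).succAbove Fin.succ
        = CycV F m a ((-1) ^ (a + 1) * x⁻¹)
            (fun t => if h : t < m + 1 - a - 2 then v ⟨t, h⟩ else 0) := by
      funext r j
      simp only [Matrix.submatrix_apply]
      have hr := succAbove_one_val hm r
      by_cases h : (r : ℕ) < 1
      · rw [if_pos h] at hr
        have hr0 : (r : ℕ) = 0 := by omega
        have hre : (⟨1, hm⟩ : Fin (m + 1)).succAbove r = ⟨0, Nat.succ_pos m⟩ :=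
          Fin.ext (by rw [hr]; exact hr0)
        rw [hre]
        simp only [RepB, CycV, Fin.val_succ, Fin.val_mk, hr0]
        rw [dif_pos trivial, if_pos trivial]
        split_ifs <;> first | rfl | (exfalso; omega)
      · rw [if_neg h] at hr
        have hre : (⟨1, hm⟩ : Fin (m + 1)).succAbove r = ⟨(r : ℕ) + 1, Nat.succ_lt_succ r.isLt⟩ :=
          Fin.ext (by rw [hr])
        rw [hre]
        simp only [RepB, CycV, Fin.val_succ, Fin.val_mk]
        rw [dif_neg (by omega : ¬((r : ℕ) + 1 = 0)), dif_neg (by omega : ¬((r : ℕ) + 1 = 1)),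
          if_neg (by omega : ¬((r : ℕ) = 0))]
        by_cases hra : (r : ℕ) + 1 ≤ a + 1
        · rw [dif_pos hra, if_pos (by omega : (r : ℕ) ≤ a)]
          split_ifs <;> first | rfl | (exfalso; omega)
        · rw [dif_neg hra, if_neg (by omega : ¬((r : ℕ) ≤ a))]
          by_cases hja : (j : ℕ) = a
          · rw [if_pos (by omega : (j : ℕ) + 1 = a + 1), if_pos hja,
              dif_pos (by omega : (r : ℕ) - a - 1 < m + 1 - a - 2)]
            exact congrArg v (Fin.ext (by simp only [Fin.val_mk]; omega))
          · rw [if_neg (by omega : ¬((j : ℕ) + 1 = a + 1)), if_neg hja]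
            split_ifs <;> first | rfl | (exfalso; omega)
    rw [hsub, det_CycV a (by omega)]
    have h1 : (-1 : F) ^ (1 : ℕ) * x * ((-1 : F) ^ a * ((-1) ^ (a + 1) * x⁻¹))
        = (-1 : F) ^ (1 + (a + (a + 1))) * (x * x⁻¹) := by
      rw [pow_add, pow_add]; ring
    rw [show ((⟨1, hm⟩ : Fin (m + 1)) : ℕ) = (1 : ℕ) from rfl, h1, mul_inv_cancel₀ hx,
      show 1 + (a + (a + 1)) = 2 * (a + 1) by omega, pow_mul, neg_one_sq, one_pow, mul_one]
  · intro i hi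
    have hiv : (i : ℕ) ≠ 1 := fun h => hi (Fin.ext h)
    have h0 : RepB F (m + 1) a x v i 0 = 0 := by
      simp only [RepB]
      have h0v : ((0 : Fin (m + 1)) : ℕ) = 0 := rfl
      rw [h0v]
      split_ifs <;> first | (exfalso; first | assumption | omega) | rfl
    rw [h0, mul_zero, zero_mul]

lemma sum_pair_support {F : Type*} [AddCommMonoid F] {k : ℕ} (f : Fin k → F) (p q : Fin k)
    (hpq : p ≠ q) (hz : ∀ l, l ≠ p → l ≠ q → f l = 0) : ∑ l, f l = f p + f q := by
  have h1 : ∑ l ∈ ({p, q} : Finset (Fin k)), f l = ∑ l, f l := by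
    refine Finset.sum_subset (Finset.subset_univ _) ?_
    intro x _ hx
    simp only [Finset.mem_insert, Finset.mem_singleton, not_or] at hx
    exact hz x hx.1 hx.2
  rw [← h1, Finset.sum_pair hpq]


/-- Coset representatives for `P\SL_k(F)`, where `P` is the subgroup of matrices of
block form `[[1, ξᵀ], [0, h]]` with `h ∈ SL_{k−1}(F)`, `ξ ∈ F^{k−1}` (equivalently,
the matrices in `SL_k(F)` whose first column is the first standard basis vector):
every `G ∈ SL_k(F)` can be multiplied on the left by some `M ∈ P` so that `M·G` has
one of the two standard forms (i) or (ii). -/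
theorem coset_reps_P (F : Type*) [Field F] (k : ℕ) (hk : 2 ≤ k)
    (G : Matrix.SpecialLinearGroup (Fin k) F) :
    ∃ M : Matrix.SpecialLinearGroup (Fin k) F,
      (∀ i j : Fin k, (j : ℕ) = 0 →
        M.val i j = if (i : ℕ) = 0 then 1 else 0) ∧
      ((∃ (x y : F) (v : Fin (k - 2) → F), x ≠ 0 ∧
          M.val * G.val = RepA F k x y v) ∨
       (∃ (a : ℕ) (ha : a ≤ k - 2) (x : F) (v : Fin (k - a - 2) → F), x ≠ 0 ∧
          M.val * G.val = RepB F k a x v)) := by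
  classical
  have hk0 : 0 < k := by omega
  set j0 : Fin k := ⟨0, hk0⟩ with hj0def
  set w : Fin k → F := fun l => (↑(G⁻¹) : Matrix (Fin k) (Fin k) F) l j0 with hwdef
  have hGw : ∀ i : Fin k, (∑ l, G.val i l * w l) = if i = j0 then (1 : F) else 0 := by
    intro i
    have h1 : G.val * (↑(G⁻¹) : Matrix (Fin k) (Fin k) F) = 1 := by
      have h := Matrix.SpecialLinearGroup.coe_mul G G⁻¹
      rw [mul_inv_cancel] at h
      rw [← h]
      simp
    have h2 := congrFun (congrFun h1 i) j0
    rw [Matrix.mul_apply, Matrix.one_apply] at h2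
    exact h2
  have key : ∀ (R : Matrix (Fin k) (Fin k) F) (hR : R.det = 1),
      (∀ i : Fin k, (∑ l, R i l * w l) = if (i : ℕ) = 0 then (1 : F) else 0) →
      ∃ M : Matrix.SpecialLinearGroup (Fin k) F,
        (∀ i j : Fin k, (j : ℕ) = 0 → M.val i j = if (i : ℕ) = 0 then 1 else 0) ∧
        M.val * G.val = R := by
    intro R hR hsum
    let Rsl : Matrix.SpecialLinearGroup (Fin k) F := ⟨R, hR⟩
    refine ⟨Rsl * G⁻¹, ?_, ?_⟩
    · intro i j hj
      have hjj : j = j0 := Fin.ext hj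
      subst hjj
      rw [Matrix.SpecialLinearGroup.coe_mul, Matrix.mul_apply]
      exact hsum i
    · have h3 : Rsl * G⁻¹ * G = Rsl := by
        rw [mul_assoc, inv_mul_cancel, mul_one]
      have h4 := Matrix.SpecialLinearGroup.coe_mul (Rsl * G⁻¹) G
      rw [h3] at h4
      exact h4.symm
  by_cases hw0 : w j0 = 0
  · -- Case B
    have hex : ∃ n, ∃ h : n < k, w ⟨n, h⟩ ≠ 0 := by
      by_contra hc
      push_neg at hc
      have h1 := hGw j0
      rw [if_pos rfl] at h1
      rw [Finset.sum_eq_zero (fun l _ => by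
        have := hc l.val l.isLt
        rw [Fin.eta] at this
        rw [this, mul_zero])] at h1
      exact zero_ne_one h1
    set n0 := Nat.find hex with hn0def
    obtain ⟨hn0k, hwn0⟩ := Nat.find_spec hex
    have hn0pos : n0 ≠ 0 := by
      intro h0
      apply hwn0
      have : (⟨n0, hn0k⟩ : Fin k) = j0 := Fin.ext (by simpa using h0)
      rw [this]
      exact hw0
    set a := n0 - 1 with hadef
    have hn0a : n0 = a + 1 := by omega
    have hak : a + 2 ≤ k := by omega
    have ha : a ≤ k - 2 := by omega
    set pa : Fin k := ⟨a + 1, by omega⟩ with hpadef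
    have hpav : ((pa : Fin k) : ℕ) = a + 1 := rfl
    have hwpa : w pa ≠ 0 := by
      have : pa = (⟨n0, hn0k⟩ : Fin k) := Fin.ext (by simp [hpadef]; omega)
      rw [this]
      exact hwn0
    have hc1 : ((-1 : F)) ^ (a + 1) ≠ 0 := pow_ne_zero _ (neg_ne_zero.mpr one_ne_zero)
    set x : F := (-1) ^ (a + 1) * w pa with hxdef
    have hx : x ≠ 0 := mul_ne_zero hc1 hwpa
    set v : Fin (k - a - 2) → F :=
      fun t => -(w ⟨(t : ℕ) + a + 2, by have := t.isLt; omega⟩) / w pa with hvdef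
    have hsum : ∀ i : Fin k, (∑ l, RepB F k a x v i l * w l)
        = if (i : ℕ) = 0 then (1 : F) else 0 := by
      intro i
      by_cases hi0 : (i : ℕ) = 0
      · rw [if_pos hi0]
        rw [Fintype.sum_eq_single pa (fun b hb => by
          have hbv : (b : ℕ) ≠ a + 1 := fun h => hb (Fin.ext h)
          have hz : RepB F k a x v i b = 0 := by
            simp only [RepB]
            split_ifs <;> first | rfl | (exfalso; first | assumption | omega)
          rw [hz, zero_mul])]
        have hval : RepB F k a x v i pa = (-1) ^ (a + 1) * x⁻¹ := by
          simp only [RepB]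
          split_ifs <;> first | rfl | (exfalso; first | assumption | omega)
        rw [hval, hxdef]
        field_simp
      · rw [if_neg hi0]
        by_cases hi1 : (i : ℕ) = 1
        · rw [Fintype.sum_eq_single j0 (fun b hb => by
            have hbv : (b : ℕ) ≠ 0 := fun h => hb (Fin.ext h)
            have hz : RepB F k a x v i b = 0 := by
              simp only [RepB]
              split_ifs <;> first | rfl | (exfalso; first | assumption | omega)
            rw [hz, zero_mul])]
          have hval : RepB F k a x v i j0 = x := by
            simp only [RepB, hj0def, Fin.val_mk]
            split_ifs <;> first | rfl | (exfalso; first | assumption | omega)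
          rw [hval, hw0, mul_zero]
        · by_cases hia : (i : ℕ) ≤ a + 1
          · have him1 : (i : ℕ) - 1 < k := by omega
            rw [Fintype.sum_eq_single (⟨(i : ℕ) - 1, him1⟩ : Fin k) (fun b hb => by
              have hbv : (b : ℕ) ≠ (i : ℕ) - 1 := fun h => hb (Fin.ext h)
              have hz : RepB F k a x v i b = 0 := by
                simp only [RepB]
                split_ifs <;> first | rfl | (exfalso; first | assumption | omega)
              rw [hz, zero_mul])]
            have hwz : w (⟨(i : ℕ) - 1, him1⟩ : Fin k) = 0 := by
              by_contra hcz
              exact Nat.find_min hex (show (i : ℕ) - 1 < n0 by omega) ⟨him1, hcz⟩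
            rw [hwz, mul_zero]
          · have hpi : pa ≠ i := fun h => by
              have h2 : ((pa : Fin k) : ℕ) = (i : ℕ) := congrArg _ h
              rw [hpav] at h2
              omega
            rw [sum_pair_support _ pa i hpi (fun l hlp hli => by
              have hlv1 : (l : ℕ) ≠ a + 1 := fun h => hlp (Fin.ext h)
              have hlv2 : (l : ℕ) ≠ (i : ℕ) := fun h => hli (Fin.ext h)
              have hz : RepB F k a x v i l = 0 := by
                simp only [RepB]
                split_ifs <;> first | rfl | (exfalso; first | assumption | omega)
              rw [hz, zero_mul])]
            have hilt : (i : ℕ) - a - 2 + a + 2 < k := by have := i.isLt; omega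
            have hv1 : RepB F k a x v i pa = -(w ⟨(i : ℕ) - a - 2 + a + 2, hilt⟩) / w pa := by
              simp only [RepB]
              split_ifs <;> first | rfl | (exfalso; first | assumption | omega)
            have hv2 : RepB F k a x v i i = 1 := by
              simp only [RepB]
              split_ifs <;> first | rfl | (exfalso; first | assumption | omega)
            have hwi : (⟨(i : ℕ) - a - 2 + a + 2, hilt⟩ : Fin k) = i :=
              Fin.ext (by simp only [Fin.val_mk]; omega)
            rw [hv1, hv2, hwi, one_mul, div_mul_cancel₀ _ hwpa]
            ring
    obtain ⟨M, hcol, hMG⟩ := key (RepB F k a x v) (det_RepB hak hx v) hsum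
    exact ⟨M, hcol, Or.inr ⟨a, ha, x, v, hx, hMG⟩⟩
  · -- Case A
    set x : F := w j0 with hxdef
    have hx : x ≠ 0 := hw0
    set j1 : Fin k := ⟨1, by omega⟩ with hj1def
    set y : F := -(w j1) with hydef
    set v : Fin (k - 2) → F :=
      fun t => -(w ⟨(t : ℕ) + 2, by have := t.isLt; omega⟩) / x with hvdef
    have hsum : ∀ i : Fin k, (∑ l, RepA F k x y v i l * w l)
        = if (i : ℕ) = 0 then (1 : F) else 0 := by
      intro i
      by_cases hi0 : (i : ℕ) = 0
      · rw [if_pos hi0]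
        rw [Fintype.sum_eq_single j0 (fun b hb => by
          have hbv : (b : ℕ) ≠ 0 := fun h => hb (Fin.ext h)
          have hz : RepA F k x y v i b = 0 := by
            simp only [RepA]
            split_ifs <;> first | rfl | (exfalso; first | assumption | omega)
          rw [hz, zero_mul])]
        have hval : RepA F k x y v i j0 = x⁻¹ := by
          simp only [RepA, hj0def, Fin.val_mk]
          split_ifs <;> first | rfl | (exfalso; first | assumption | omega)
        rw [hval, inv_mul_cancel₀ hx]
      · rw [if_neg hi0]
        by_cases hi1 : (i : ℕ) = 1
        · have hji : j0 ≠ i := fun h => by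
            have h2 : ((j0 : Fin k) : ℕ) = (i : ℕ) := congrArg _ h
            rw [show ((j0 : Fin k) : ℕ) = 0 from rfl] at h2
            omega
          rw [sum_pair_support _ j0 i hji (fun l hlp hli => by
            have hlv1 : (l : ℕ) ≠ 0 := fun h => hlp (Fin.ext h)
            have hlv2 : (l : ℕ) ≠ (i : ℕ) := fun h => hli (Fin.ext h)
            have hz : RepA F k x y v i l = 0 := by
              simp only [RepA]
              split_ifs <;> first | rfl | (exfalso; first | assumption | omega)
            rw [hz, zero_mul])]
          have hv1 : RepA F k x y v i j0 = y := by
            simp only [RepA, hj0def, Fin.val_mk]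
            split_ifs <;> first | rfl | (exfalso; first | assumption | omega)
          have hv2 : RepA F k x y v i i = x := by
            simp only [RepA]
            split_ifs <;> first | rfl | (exfalso; first | assumption | omega)
          have hwi : (j1 : Fin k) = i := Fin.ext (by simp only [hj1def, Fin.val_mk]; omega)
          rw [hv1, hv2, ← hwi, hydef]
          ring
        · have hji : j0 ≠ i := fun h => by
            have h2 : ((j0 : Fin k) : ℕ) = (i : ℕ) := congrArg _ h
            rw [show ((j0 : Fin k) : ℕ) = 0 from rfl] at h2
            omega
          rw [sum_pair_support _ j0 i hji (fun l hlp hli => by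
            have hlv1 : (l : ℕ) ≠ 0 := fun h => hlp (Fin.ext h)
            have hlv2 : (l : ℕ) ≠ (i : ℕ) := fun h => hli (Fin.ext h)
            have hz : RepA F k x y v i l = 0 := by
              simp only [RepA]
              split_ifs <;> first | rfl | (exfalso; first | assumption | omega)
            rw [hz, zero_mul])]
          have hilt : (i : ℕ) - 2 + 2 < k := by have := i.isLt; omega
          have hv1 : RepA F k x y v i j0 = -(w ⟨(i : ℕ) - 2 + 2, hilt⟩) / x := by
            simp only [RepA, hj0def, Fin.val_mk]
            split_ifs <;> first | rfl | (exfalso; first | assumption | omega)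
          have hv2 : RepA F k x y v i i = 1 := by
            simp only [RepA]
            split_ifs <;> first | rfl | (exfalso; first | assumption | omega)
          have hwi : (⟨(i : ℕ) - 2 + 2, hilt⟩ : Fin k) = i :=
            Fin.ext (by simp only [Fin.val_mk]; omega)
          have hwj0 : w j0 = x := hxdef.symm
          rw [hv1, hv2, hwi, one_mul, hwj0, div_mul_cancel₀ _ hx]
          ring
    obtain ⟨M, hcol, hMG⟩ := key (RepA F k x y v) (det_RepA hk hx y v) hsum
    exact ⟨M, hcol, Or.inl ⟨x, y, v, hx, hMG⟩⟩
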